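/- Let f : ℝ → ℝ be continuous with f(x) ≥ 0 for all x, let F(x) = ∫₀ˣ du/(1+f(u)), let h be the inverse of F on J = F(ℝ), and define g(y) = f(h(y))/(1+f(h(y))). Fix a constant I > 0 and reals x₋ < x₊, and set y₋ = F(x₋), y₊ = F(x₊). Then the spiking period is coordinate-independent: ∫_{x₋}^{x₊} dx/(f(x)+I) = ∫_{y₋}^{y₊} dy/((1−I)·g(y) + I). -/

import Mathlib

open Set MeasureTheory intervalIntegral

/-- Let `f : ℝ → ℝ` be continuous with `f x ≥ 0`, let
`F x = ∫ u in 0..x, 1 / (1 + f u)`, let `h` be the inverse of `F` on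
`J = Set.range F` (modeled as a total function with `h (F x) = x`), and define
`g y = f (h y) / (1 + f (h y))`.  Fix a constant `I > 0` and reals
`x₋ < x₊`, and set `y₋ = F x₋`, `y₊ = F x₊`.  Then the spiking period is
coordinate-independent:
`∫ x in x₋..x₊, 1 / (f x + I) = ∫ y in y₋..y₊, 1 / ((1 - I) * g y + I)`. -/
theorem spiking_period_coordinate_independent
    (f : ℝ → ℝ) (hcont : Continuous f) (hge : ∀ x, 0 ≤ f x)
    (F : ℝ → ℝ) (hF : ∀ x, F x = ∫ u in (0:ℝ)..x, 1 / (1 + f u))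
    (h : ℝ → ℝ) (hinv : ∀ x, h (F x) = x)
    (g : ℝ → ℝ) (hg : ∀ y, g y = f (h y) / (1 + f (h y)))
    (I : ℝ) (hI : 0 < I) (xm xp : ℝ) (hx : xm < xp) :
    ∫ x in xm..xp, 1 / (f x + I)
      = ∫ y in (F xm)..(F xp), 1 / ((1 - I) * g y + I) := by
  have h1f : ∀ x, (0:ℝ) < 1 + f x := fun x => by linarith [hge x]
  set F' : ℝ → ℝ := fun x => 1 / (1 + f x) with hF'def
  have hcontF' : Continuous F' :=
    continuous_const.div (continuous_const.add hcont) fun x => (h1f x).ne'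
  have hder : ∀ x, HasDerivAt F (F' x) x := by
    intro x
    have heq : F = fun u => ∫ t in (0:ℝ)..u, F' t := funext hF
    rw [heq]
    exact (hcontF'.integral_hasStrictDerivAt 0 x).hasDerivAt
  have hFmono : StrictMono F := by
    apply strictMono_of_deriv_pos
    intro x
    rw [(hder x).deriv]
    exact div_pos one_pos (h1f x)
  have hFcont : Continuous F :=
    continuous_iff_continuousAt.2 fun x => (hder x).continuousAt
  -- image of the interval
  have himg : F '' Icc xm xp = Icc (F xm) (F xp) := by
    apply Subset.antisymm
    · rintro _ ⟨x, hx', rfl⟩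
      exact ⟨hFmono.monotone hx'.1, hFmono.monotone hx'.2⟩
    · exact intermediate_value_Icc hx.le hFcont.continuousOn
  have hbij : BijOn F (Icc xm xp) (Icc (F xm) (F xp)) :=
    ⟨fun x hx' => himg ▸ mem_image_of_mem F hx', hFmono.injective.injOn,
      fun y hy => by rw [← himg] at hy; exact hy⟩
  -- continuity of h on the image interval
  haveI : CompactSpace (Icc xm xp) := isCompact_iff_compactSpace.mp isCompact_Icc
  let e : Icc xm xp ≃ Icc (F xm) (F xp) := hbij.equiv F
  have he : Continuous e := by
    apply Continuous.subtype_mk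
    exact hFcont.comp continuous_subtype_val
  let homeo := Continuous.homeoOfEquivCompactToT2 (f := e) he
  have hconth : ContinuousOn h (Icc (F xm) (F xp)) := by
    rw [continuousOn_iff_continuous_restrict]
    have heq : (Icc (F xm) (F xp)).domRestrict h
        = fun y => ((homeo.symm y : Icc xm xp) : ℝ) := by
      funext y
      obtain ⟨x, hx', hFx⟩ := hbij.surjOn y.2
      have hy : y = homeo ⟨x, hx'⟩ := Subtype.ext hFx.symm
      rw [hy, Homeomorph.symm_apply_apply]
      have : (homeo ⟨x, hx'⟩ : ℝ) = F x := rfl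
      show h ((homeo ⟨x, hx'⟩ : ℝ)) = x
      rw [this, hinv]
    rw [heq]
    exact continuous_subtype_val.comp homeo.symm.continuous
  -- the transformed integrand
  have hgy : ∀ y, (1 - I) * g y + I = (f (h y) + I) / (1 + f (h y)) := by
    intro y
    rw [hg y]
    field_simp [(h1f (h y)).ne']
    ring
  have hpos : ∀ y, 0 < (1 - I) * g y + I := by
    intro y
    rw [hgy]
    exact div_pos (by linarith [hge (h y)]) (h1f (h y))
  have hGcont : ContinuousOn (fun y => 1 / ((1 - I) * g y + I)) (Icc (F xm) (F xp)) := by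
    apply ContinuousOn.div continuousOn_const
    · have hfh : ContinuousOn (fun y => f (h y)) (Icc (F xm) (F xp)) :=
        hcont.comp_continuousOn hconth
      have : ContinuousOn g (Icc (F xm) (F xp)) := by
        have : ContinuousOn (fun y => f (h y) / (1 + f (h y))) (Icc (F xm) (F xp)) :=
          hfh.div (continuousOn_const.add hfh) fun y _ => (h1f (h y)).ne'
        exact this.congr fun y _ => hg y
      exact (continuousOn_const.mul this).add continuousOn_const
    · exact fun y _ => (hpos y).ne'
  have hIcc : uIcc xm xp = Icc xm xp := uIcc_of_le hx.le
  have key := intervalIntegral.integral_comp_smul_deriv'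
    (f := F) (f' := F') (g := fun y => 1 / ((1 - I) * g y + I))
    (fun x _ => hder x) hcontF'.continuousOn
    (by rw [hIcc, himg]; exact hGcont)
  rw [← key]
  apply intervalIntegral.integral_congr
  intro x _
  have hfx : (0:ℝ) < f x + I := by linarith [hge x]
  simp only [Function.comp_apply, smul_eq_mul, hF'def]
  rw [hgy (F x), hinv x, one_div_div]
  rw [div_mul_div_comm, one_mul, div_mul_cancel_left₀ (h1f x).ne', one_div]
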